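/- Let φ be an analytic self-map of D with φ(0) = 0 which is not a rotation, and suppose that for every a ∈ D there exists a sequence {z_n} ⊂ D with |z_n| → 1, φ(z_n) → a, and τ_φ(z_n) → 1, where τ_φ(z) = (1-|z|²)|φ'(z)|/(1-|φ(z)|²). Then C_φ is an isometry on the harmonic Bloch space HB(1). -/

import Mathlib

open Complex Metric Set Filter
noncomputable section

/-- The open unit disk in `ℂ`. -/
def unitDisk : Set ℂ := Metric.ball (0 : ℂ) 1

/-- The set of values `(1-|z|²)^α (|f_z(z)| + |f_z̄(z)|)` for `z` in the unit disk, where the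
harmonic function is `f = h + conj g` with `h, g` analytic, so `f_z = h'` and `f_z̄ = conj g'`. -/
def hbSet (α : ℝ) (h g : ℂ → ℂ) : Set ℝ :=
  (fun z => (1 - ‖z‖ ^ 2) ^ α *
    (‖deriv h z‖ + ‖deriv g z‖)) '' unitDisk

/-- The harmonic α-Bloch seminorm `‖f‖_{HB(α)}` of `f = h + conj g`. -/
def hbSemi (α : ℝ) (h g : ℂ → ℂ) : ℝ := sSup (hbSet α h g)

/-- The harmonic α-Bloch norm `|||f|||_{HB(α)} = |f(0)| + ‖f‖_{HB(α)}` of `f = h + conj g`. -/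
def hbNorm (α : ℝ) (h g : ℂ → ℂ) : ℝ :=
  ‖h 0 + (starRingEnd ℂ) (g 0)‖ + hbSemi α h g

/-- An analytic self-map of the unit disk. -/
def IsSelfMap (φ : ℂ → ℂ) : Prop :=
  DifferentiableOn ℂ φ unitDisk ∧ MapsTo φ unitDisk unitDisk

/-- `f = h + conj g` is a harmonic α-Bloch function: `h, g` analytic on the disk and the
Bloch quantity is bounded. -/
def IsHB (α : ℝ) (h g : ℂ → ℂ) : Prop :=
  DifferentiableOn ℂ h unitDisk ∧ DifferentiableOn ℂ g unitDisk ∧ BddAbove (hbSet α h g)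

/-- The composition operator `C_φ` is an isometry on `HB(α)`: `|||f∘φ||| = |||f|||` for every
harmonic α-Bloch function `f = h + conj g` (note `f ∘ φ = h∘φ + conj (g∘φ)`). -/
def IsIsometryOn (α : ℝ) (φ : ℂ → ℂ) : Prop :=
  ∀ h g : ℂ → ℂ, IsHB α h g → hbNorm α (h ∘ φ) (g ∘ φ) = hbNorm α h g

/-- `φ` is a rotation of the unit disk. -/
def IsRotation (φ : ℂ → ℂ) : Prop :=
  ∃ lam : ℂ, ‖lam‖ = 1 ∧ ∀ z ∈ unitDisk, φ z = lam * z

/-- `τ_φ(z) = (1-|z|²)|φ'(z)| / (1-|φ(z)|²)`. -/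
def tauPhi (φ : ℂ → ℂ) (z : ℂ) : ℝ :=
  (1 - ‖z‖ ^ 2) * ‖deriv φ z‖ / (1 - ‖φ z‖ ^ 2)

section SchwarzPick

lemma den_ne {a w : ℂ} (ha : ‖a‖ < 1) (hw : ‖w‖ < 1) :
    (1 + (starRingEnd ℂ) a * w) ≠ 0 := by
  intro h
  have h1 : (starRingEnd ℂ) a * w = -1 := by linear_combination h
  have h2 : ‖(starRingEnd ℂ) a * w‖ = 1 := by rw [h1]; simp
  rw [norm_mul, Complex.norm_conj] at h2
  nlinarith [norm_nonneg a, norm_nonneg w]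

lemma key_id (a w : ℂ) : Complex.normSq (1 + (starRingEnd ℂ) a * w) - Complex.normSq (w + a)
    = (1 - Complex.normSq a) * (1 - Complex.normSq w) := by
  simp [Complex.normSq_apply, Complex.add_re, Complex.add_im, Complex.mul_re, Complex.mul_im,
    Complex.conj_re, Complex.conj_im]
  ring

lemma mob_mem {a w : ℂ} (ha : ‖a‖ < 1) (hw : ‖w‖ < 1) :
    ‖(w + a) / (1 + (starRingEnd ℂ) a * w)‖ < 1 := by
  have hd := den_ne ha hw
  have ha2 : Complex.normSq a < 1 := by rw [← Complex.sq_norm]; nlinarith [norm_nonneg a]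
  have hw2 : Complex.normSq w < 1 := by rw [← Complex.sq_norm]; nlinarith [norm_nonneg w]
  have h2 : ‖w + a‖ ^ 2 < ‖1 + (starRingEnd ℂ) a * w‖ ^ 2 := by
    rw [Complex.sq_norm, Complex.sq_norm]
    nlinarith [key_id a w]
  have h3 : ‖w + a‖ < ‖1 + (starRingEnd ℂ) a * w‖ :=
    lt_of_pow_lt_pow_left₀ 2 (norm_nonneg _) h2
  rw [norm_div]
  exact (div_lt_one (lt_of_le_of_lt (norm_nonneg _) h3)).mpr h3

lemma schwarz_pick {φ : ℂ → ℂ} (hd : DifferentiableOn ℂ φ (ball 0 1))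
    (hm : MapsTo φ (ball 0 1) (ball 0 1)) {a : ℂ} (ha : a ∈ ball 0 1) :
    (1 - ‖a‖ ^ 2) * ‖deriv φ a‖ ≤ 1 - ‖φ a‖ ^ 2 := by
  have haa : ‖a‖ < 1 := by simpa [mem_ball_zero_iff] using ha
  set b := φ a with hbdef
  have hb : ‖b‖ < 1 := by simpa [mem_ball_zero_iff] using hm ha
  set σ : ℂ → ℂ := fun w => (w + a) / (1 + (starRingEnd ℂ) a * w) with hσ
  set m : ℂ → ℂ := fun w => (w + -b) / (1 + (starRingEnd ℂ) (-b) * w) with hmm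
  set ψ : ℂ → ℂ := fun z => m (φ (σ z)) with hψ
  -- σ maps ball to ball
  have hσmaps : MapsTo σ (ball 0 1) (ball 0 1) := fun w hw => by
    simp only [mem_ball_zero_iff] at hw ⊢
    exact mob_mem haa hw
  have hmb : ‖-b‖ < 1 := by simpa using hb
  have hmmaps : MapsTo m (ball 0 1) (ball 0 1) := fun w hw => by
    simp only [mem_ball_zero_iff] at hw ⊢
    exact mob_mem hmb hw
  have hψmaps : MapsTo ψ (ball 0 1) (ball 0 1) := fun z hz => hmmaps (hm (hσmaps hz))
  -- differentiability
  have hσdiff : DifferentiableOn ℂ σ (ball 0 1) := by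
    apply DifferentiableOn.div
    · exact (differentiable_id.add_const a).differentiableOn
    · exact ((differentiable_id.const_mul _).const_add 1).differentiableOn
    · intro w hw
      exact den_ne haa (by simpa [mem_ball_zero_iff] using hw)
  have hmdiff : DifferentiableOn ℂ m (ball 0 1) := by
    apply DifferentiableOn.div
    · exact (differentiable_id.add_const (-b)).differentiableOn
    · exact ((differentiable_id.const_mul _).const_add 1).differentiableOn
    · intro w hw
      exact den_ne hmb (by simpa [mem_ball_zero_iff] using hw)
  have hψdiff : DifferentiableOn ℂ ψ (ball 0 1) :=
    (hmdiff.comp (hd.comp hσdiff hσmaps) (hm.comp hσmaps)).congr (fun z hz => rfl)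
  have hσ0 : σ 0 = a := by simp [hσ]
  have hψ0 : ψ 0 = 0 := by simp [hψ, hσ0, hmm, hbdef]
  -- derivative of σ at 0
  have hden0 : (1 + (starRingEnd ℂ) a * (0:ℂ)) ≠ 0 := by simp
  have hσd : HasDerivAt σ ((1 : ℂ) - Complex.normSq a) 0 := by
    have h1 : HasDerivAt (fun w : ℂ => w + a) 1 0 := (hasDerivAt_id 0).add_const a
    have h2 : HasDerivAt (fun w : ℂ => 1 + (starRingEnd ℂ) a * w) ((starRingEnd ℂ) a * 1) 0 :=
      ((hasDerivAt_id 0).const_mul _).const_add 1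
    have := h1.div h2 hden0
    refine this.congr_deriv (Eq.symm ?_)
    have : a * (starRingEnd ℂ) a = (Complex.normSq a : ℂ) := Complex.mul_conj a
    simp only [mul_zero, add_zero, zero_add, mul_one, one_pow, div_one]
    linear_combination this
  -- derivative of m at b
  have hdenb : (1 + (starRingEnd ℂ) (-b) * b) ≠ 0 := by
    have : (1 : ℂ) + (starRingEnd ℂ) (-b) * b = ((1 - Complex.normSq b : ℝ) : ℂ) := by
      push_cast
      rw [map_neg]
      linear_combination Complex.normSq_eq_conj_mul_self (z := b)
    rw [this]
    have hb2 : Complex.normSq b < 1 := by rw [← Complex.sq_norm]; nlinarith [norm_nonneg b]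
    exact_mod_cast (by linarith : (0:ℝ) < 1 - Complex.normSq b).ne'
  have hmd : HasDerivAt m (((1 : ℂ) - Complex.normSq b)⁻¹) b := by
    have h1 : HasDerivAt (fun w : ℂ => w + -b) 1 b := (hasDerivAt_id b).add_const (-b)
    have h2 : HasDerivAt (fun w : ℂ => 1 + (starRingEnd ℂ) (-b) * w) ((starRingEnd ℂ) (-b) * 1) b :=
      ((hasDerivAt_id b).const_mul _).const_add 1
    have := h1.div h2 hdenb
    refine this.congr_deriv (Eq.symm ?_)
    have hc : (starRingEnd ℂ) b * b = (Complex.normSq b : ℂ) := Complex.normSq_eq_conj_mul_self.symm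
    have hne : (1 : ℂ) - Complex.normSq b ≠ 0 := by
      intro h
      apply hdenb
      rw [map_neg]
      linear_combination h - hc
    rw [show (b + -b) = 0 by ring, show (1:ℂ) + (starRingEnd ℂ) (-b) * b = 1 - (Complex.normSq b : ℂ) by rw [map_neg]; linear_combination -hc]
    field_simp
    ring
  have hφd : HasDerivAt φ (deriv φ a) a :=
    ((hd.differentiableAt (isOpen_ball.mem_nhds ha)).hasDerivAt)
  have hcomp : HasDerivAt ψ (((1 : ℂ) - Complex.normSq b)⁻¹ * (deriv φ a * ((1:ℂ) - Complex.normSq a))) 0 := by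
    have hφd' : HasDerivAt φ (deriv φ a) (σ 0) := hσ0 ▸ hφd
    have h1 : HasDerivAt (fun z => φ (σ z)) (deriv φ a * ((1:ℂ) - Complex.normSq a)) 0 :=
      HasDerivAt.comp 0 hφd' hσd
    have hmd' : HasDerivAt m (((1 : ℂ) - Complex.normSq b)⁻¹) ((fun z => φ (σ z)) 0) := by
      rw [show (fun z => φ (σ z)) 0 = b by simp [hσ0, hbdef]]
      exact hmd
    exact HasDerivAt.comp 0 hmd' h1
  -- Schwarz lemma
  have hsch := Complex.norm_deriv_le_one_of_mapsTo_ball hψdiff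
    (fun z hz => by rw [hψ0]; exact ball_subset_closedBall (hψmaps hz)) one_pos
  rw [hcomp.deriv] at hsch
  have hb2 : Complex.normSq b < 1 := by rw [← Complex.sq_norm]; nlinarith [norm_nonneg b]
  have habs : ‖((1 : ℂ) - Complex.normSq b)⁻¹‖ = (1 - Complex.normSq b)⁻¹ := by
    rw [norm_inv]
    congr 1
    rw [show (1 : ℂ) - Complex.normSq b = ((1 - Complex.normSq b : ℝ) : ℂ) by push_cast; ring]
    rw [Complex.norm_real, Real.norm_eq_abs, abs_of_pos (by linarith)]
  have habs2 : ‖(1 : ℂ) - Complex.normSq a‖ = 1 - Complex.normSq a := by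
    have ha2 : Complex.normSq a < 1 := by rw [← Complex.sq_norm]; nlinarith [norm_nonneg a]
    rw [show (1 : ℂ) - Complex.normSq a = ((1 - Complex.normSq a : ℝ) : ℂ) by push_cast; ring]
    rw [Complex.norm_real, Real.norm_eq_abs, abs_of_pos (by linarith)]
  rw [norm_mul, norm_mul, habs, habs2] at hsch
  rw [← Complex.sq_norm a, ← Complex.sq_norm b] at *
  have hpos : (0:ℝ) < 1 - ‖b‖ ^ 2 := by nlinarith [norm_nonneg b]
  rw [inv_mul_le_iff₀ hpos] at hsch
  nlinarith [hsch]

end SchwarzPick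

/-- let `φ` be an analytic self-map of `D` with `φ(0) = 0` which is not a rotation,
and suppose that for every `a ∈ D` there is a sequence `(z_n) ⊂ D` with `|z_n| → 1`,
`φ(z_n) → a` and `τ_φ(z_n) → 1`.  Then `C_φ` is an isometry on `HB(1)`. -/

theorem stmt6 (φ : ℂ → ℂ) (hφ : IsSelfMap φ) (h0 : φ 0 = 0) (hrot : ¬ IsRotation φ)
    (hseq : ∀ a ∈ unitDisk, ∃ z : ℕ → ℂ, (∀ n, z n ∈ unitDisk) ∧
      Tendsto (fun n => ‖z n‖) atTop (nhds 1) ∧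
      Tendsto (fun n => φ (z n)) atTop (nhds a) ∧
      Tendsto (fun n => tauPhi φ (z n)) atTop (nhds 1)) :
    IsIsometryOn 1 φ := by
  intro h g hhb
  obtain ⟨hh, hg, hbdd⟩ := hhb
  have hOpen : IsOpen unitDisk := isOpen_ball
  obtain ⟨hφd, hφm⟩ := hφ
  -- the Bloch quantity function
  set F : ℂ → ℝ := fun w =>
    (1 - ‖w‖ ^ 2) * (‖deriv h w‖ + ‖deriv g w‖) with hF
  -- continuity of F on the disk
  have hderivh : ContinuousOn (deriv h) unitDisk :=
    ((hh.analyticOnNhd hOpen).deriv).continuousOn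
  have hderivg : ContinuousOn (deriv g) unitDisk :=
    ((hg.analyticOnNhd hOpen).deriv).continuousOn
  have hFcont : ContinuousOn F unitDisk := by
    apply ContinuousOn.mul
    · exact (continuous_const.sub (continuous_norm.pow 2)).continuousOn
    · exact (continuous_norm.comp_continuousOn hderivh).add
        (continuous_norm.comp_continuousOn hderivg)
  -- membership lemma
  have hmem : ∀ z, z ∈ unitDisk → ‖z‖ < 1 := fun z hz => by
    simpa [unitDisk, mem_ball_zero_iff] using hz
  have h0mem : (0 : ℂ) ∈ unitDisk := by simp [unitDisk]
  -- chain rule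
  have hchain : ∀ z ∈ unitDisk,
      deriv (h ∘ φ) z = deriv h (φ z) * deriv φ z ∧
      deriv (g ∘ φ) z = deriv g (φ z) * deriv φ z := by
    intro z hz
    have hφz : DifferentiableAt ℂ φ z := hφd.differentiableAt (hOpen.mem_nhds hz)
    have hhz : DifferentiableAt ℂ h (φ z) := hh.differentiableAt (hOpen.mem_nhds (hφm hz))
    have hgz : DifferentiableAt ℂ g (φ z) := hg.differentiableAt (hOpen.mem_nhds (hφm hz))
    exact ⟨deriv_comp z hhz hφz, deriv_comp z hgz hφz⟩
  -- value identity on the disk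
  have hval : ∀ z ∈ unitDisk,
      (1 - ‖z‖ ^ 2) ^ (1 : ℝ) *
        (‖deriv (h ∘ φ) z‖ + ‖deriv (g ∘ φ) z‖) =
      ((1 - ‖z‖ ^ 2) * ‖deriv φ z‖) *
        (‖deriv h (φ z)‖ + ‖deriv g (φ z)‖) := by
    intro z hz
    obtain ⟨e1, e2⟩ := hchain z hz
    rw [e1, e2, norm_mul, norm_mul, Real.rpow_one]
    ring
  -- pointwise bound : every element of the composed set is ≤ F (φ z) ≤ sSup S₂
  have hS2 : ∀ w ∈ unitDisk, F w ∈ hbSet 1 h g := by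
    intro w hw
    refine ⟨w, hw, ?_⟩
    show (1 - ‖w‖ ^ 2) ^ (1 : ℝ) *
      (‖deriv h w‖ + ‖deriv g w‖) = F w
    rw [Real.rpow_one]
  have hptle : ∀ z ∈ unitDisk,
      (1 - ‖z‖ ^ 2) ^ (1 : ℝ) *
        (‖deriv (h ∘ φ) z‖ + ‖deriv (g ∘ φ) z‖) ≤ F (φ z) := by
    intro z hz
    rw [hval z hz]
    have := schwarz_pick hφd hφm (a := z) hz
    have hnn : 0 ≤ ‖deriv h (φ z)‖ + ‖deriv g (φ z)‖ := by positivity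
    calc ((1 - ‖z‖ ^ 2) * ‖deriv φ z‖) *
          (‖deriv h (φ z)‖ + ‖deriv g (φ z)‖)
        ≤ (1 - ‖φ z‖ ^ 2) *
          (‖deriv h (φ z)‖ + ‖deriv g (φ z)‖) :=
          mul_le_mul_of_nonneg_right this hnn
      _ = F (φ z) := rfl
  have hub1 : ∀ x ∈ hbSet 1 (h ∘ φ) (g ∘ φ), x ≤ sSup (hbSet 1 h g) := by
    rintro x ⟨z, hz, rfl⟩
    exact (hptle z hz).trans (le_csSup hbdd (hS2 _ (hφm hz)))
  have hbdd1 : BddAbove (hbSet 1 (h ∘ φ) (g ∘ φ)) := ⟨_, hub1⟩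
  have hne1 : (hbSet 1 (h ∘ φ) (g ∘ φ)).Nonempty := ⟨_, mem_image_of_mem _ h0mem⟩
  have hne2 : (hbSet 1 h g).Nonempty := ⟨_, mem_image_of_mem _ h0mem⟩
  -- reverse inequality
  have hle2 : sSup (hbSet 1 h g) ≤ sSup (hbSet 1 (h ∘ φ) (g ∘ φ)) := by
    apply csSup_le hne2
    rintro x ⟨a, ha, rfl⟩
    obtain ⟨z, hzmem, _, hφz, hτ⟩ := hseq a ha
    -- the sequence of values in the composed set
    set v : ℕ → ℝ := fun n =>
      (1 - ‖z n‖ ^ 2) ^ (1 : ℝ) *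
        (‖deriv (h ∘ φ) (z n)‖ + ‖deriv (g ∘ φ) (z n)‖) with hv
    have hvmem : ∀ n, v n ∈ hbSet 1 (h ∘ φ) (g ∘ φ) := fun n =>
      mem_image_of_mem _ (hzmem n)
    have hveq : ∀ n, v n = tauPhi φ (z n) * F (φ (z n)) := by
      intro n
      have hz := hzmem n
      have hne : (1 : ℝ) - ‖φ (z n)‖ ^ 2 ≠ 0 := by
        have := hmem _ (hφm hz)
        nlinarith [norm_nonneg (φ (z n))]
      show (1 - ‖z n‖ ^ 2) ^ (1 : ℝ) *
        (‖deriv (h ∘ φ) (z n)‖ + ‖deriv (g ∘ φ) (z n)‖) = _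
      rw [hval (z n) hz]
      simp only [tauPhi, hF]
      field_simp
    have hFa : Tendsto (fun n => F (φ (z n))) atTop (nhds (F a)) := by
      have hFat : ContinuousAt F a := hFcont.continuousAt (hOpen.mem_nhds ha)
      exact hFat.tendsto.comp hφz
    have hvt : Tendsto v atTop (nhds (F a)) := by
      have := hτ.mul hFa
      rw [one_mul] at this
      exact this.congr (fun n => (hveq n).symm)
    have hgoal : (1 - ‖a‖ ^ 2) ^ (1 : ℝ) *
        (‖deriv h a‖ + ‖deriv g a‖) = F a := by
      rw [Real.rpow_one]
    show (1 - ‖a‖ ^ 2) ^ (1 : ℝ) *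
      (‖deriv h a‖ + ‖deriv g a‖) ≤ _
    rw [hgoal]
    exact le_of_tendsto hvt (Eventually.of_forall fun n => le_csSup hbdd1 (hvmem n))
  have hsemi : hbSemi 1 (h ∘ φ) (g ∘ φ) = hbSemi 1 h g := by
    unfold hbSemi
    exact le_antisymm (csSup_le hne1 hub1) hle2
  unfold hbNorm
  rw [hsemi]
  congr 2 <;> simp [Function.comp, h0]
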